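/- For f(z) = z², the radial potential V(x) = f(|x|²/2) = |x|⁴/4 (the quartic anharmonic potential) satisfies f'' = 2 > 0, f''' = 0 ≥ 0 and f⁽⁴⁾ = 0 ≥ 0 everywhere; consequently, for all x, v ∈ ℝⁿ and all orthonormal u, w ∈ ℝⁿ, ∂²_s ⟨u, Hess V(x+t(v+sw)) u⟩|_{s=0} ≥ 2t² for every t. -/
import Mathlib

private lemma quad_deriv' (c0 c1 c2 : ℝ) :
    deriv (fun s : ℝ => c0 + c1 * s + c2 * s ^ 2) = fun s => c1 + c2 * (2 * s) := by
  funext s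
  have h : HasDerivAt (fun s : ℝ => c0 + c1 * s + c2 * s ^ 2)
      (0 + c1 * 1 + c2 * (↑2 * s ^ 1)) s :=
    ((hasDerivAt_const s c0).add ((hasDerivAt_id s).const_mul c1)).add
      ((hasDerivAt_pow 2 s).const_mul c2)
  simpa using h.deriv

private lemma quad_iter2' (c0 c1 c2 : ℝ) :
    iteratedDeriv 2 (fun s : ℝ => c0 + c1 * s + c2 * s ^ 2) = fun _ => 2 * c2 := by
  rw [show (2:ℕ) = 1 + 1 from rfl, iteratedDeriv_succ, iteratedDeriv_one, quad_deriv']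
  funext s
  have h : HasDerivAt (fun s : ℝ => c1 + c2 * (2 * s)) (0 + c2 * (2 * 1)) s :=
    (hasDerivAt_const s c1).add (((hasDerivAt_id s).const_mul 2).const_mul c2)
  simpa [mul_comm] using h.deriv



/-- For `f(z) = z²` the radial potential `V(x) = f(|x|²/2) = |x|⁴/4`
(the quartic anharmonic potential) satisfies `f'' = 2 > 0`, `f''' = 0` and `f⁽⁴⁾ = 0`
everywhere; consequently for all `x, v` and all orthonormal `u, w`, the second
`s`-derivative at `s = 0` of `s ↦ ⟨u, Hess V(x + t(v+sw)) u⟩` is at least `2t²` for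
every `t`, where `Hess V(p)(u,u) = f'(|p|²/2)|u|² + f''(|p|²/2)⟨p,u⟩²`. -/
theorem anharmonic_oscillator_quartic_potential
    (n : ℕ) (f : ℝ → ℝ) (hf : ∀ z, f z = z ^ 2)
    (x v u w : Fin n → ℝ)
    (hu : ∑ i, u i ^ 2 = 1) (hw : ∑ i, w i ^ 2 = 1) (huw : ∑ i, u i * w i = 0) :
    (∀ y : Fin n → ℝ, f ((∑ i, y i ^ 2) / 2) = (∑ i, y i ^ 2) ^ 2 / 4) ∧
    (∀ z, iteratedDeriv 2 f z = 2) ∧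
    (∀ z, iteratedDeriv 3 f z = 0) ∧
    (∀ z, iteratedDeriv 4 f z = 0) ∧
    ∀ t : ℝ,
      2 * t ^ 2 ≤ iteratedDeriv 2 (fun s : ℝ =>
        deriv f ((∑ i, (x i + t * (v i + s * w i)) ^ 2) / 2)
          + iteratedDeriv 2 f ((∑ i, (x i + t * (v i + s * w i)) ^ 2) / 2)
              * (∑ i, (x i + t * (v i + s * w i)) * u i) ^ 2) 0 := by
  have hf' : f = fun z : ℝ => z ^ 2 := funext hf
  subst hf'
  have hderiv : deriv (fun z : ℝ => z ^ 2) = fun z => 2 * z := by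
    funext z; simp [deriv_pow]
  have h2 : iteratedDeriv 2 (fun z : ℝ => z ^ 2) = fun _ => 2 := by
    have : (fun z : ℝ => z ^ 2) = fun s : ℝ => 0 + 0 * s + 1 * s ^ 2 := by funext; ring
    rw [this, quad_iter2']; norm_num
  have h3 : iteratedDeriv 3 (fun z : ℝ => z ^ 2) = fun _ => 0 := by
    rw [show (3:ℕ) = 2 + 1 from rfl, iteratedDeriv_succ, h2]
    funext z; simp
  have h4 : iteratedDeriv 4 (fun z : ℝ => z ^ 2) = fun _ => 0 := by
    rw [show (4:ℕ) = 3 + 1 from rfl, iteratedDeriv_succ, h3]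
    funext z; simp
  refine ⟨fun y => by ring, fun z => by rw [h2], fun z => by rw [h3], fun z => by rw [h4],
    fun t => ?_⟩
  have hQ : ∀ s : ℝ, (∑ i, (x i + t * (v i + s * w i)) ^ 2)
      = (∑ i, (x i + t * v i) ^ 2) + (2 * t * ∑ i, (x i + t * v i) * w i) * s
        + t ^ 2 * s ^ 2 := by
    intro s
    have he : ∀ i ∈ Finset.univ, (x i + t * (v i + s * w i)) ^ 2
        = (x i + t * v i) ^ 2 + (2 * t * s) * ((x i + t * v i) * w i)
          + (t ^ 2 * s ^ 2) * (w i ^ 2) := fun i _ => by ring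
    rw [Finset.sum_congr rfl he, Finset.sum_add_distrib, Finset.sum_add_distrib,
      ← Finset.mul_sum, ← Finset.mul_sum, hw]
    ring
  have hL : ∀ s : ℝ, (∑ i, (x i + t * (v i + s * w i)) * u i)
      = ∑ i, (x i + t * v i) * u i := by
    intro s
    have he : ∀ i ∈ Finset.univ, (x i + t * (v i + s * w i)) * u i
        = (x i + t * v i) * u i + (t * s) * (u i * w i) := fun i _ => by ring
    rw [Finset.sum_congr rfl he, Finset.sum_add_distrib, ← Finset.mul_sum, huw]
    ring
  set S2 := ∑ i, (x i + t * v i) ^ 2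
  set SAB := ∑ i, (x i + t * v i) * w i
  set A := ∑ i, (x i + t * v i) * u i
  have hfun : (fun s : ℝ =>
      deriv (fun z : ℝ => z ^ 2) ((∑ i, (x i + t * (v i + s * w i)) ^ 2) / 2)
        + iteratedDeriv 2 (fun z : ℝ => z ^ 2)
            ((∑ i, (x i + t * (v i + s * w i)) ^ 2) / 2)
            * (∑ i, (x i + t * (v i + s * w i)) * u i) ^ 2)
      = fun s : ℝ => (S2 + 2 * A ^ 2) + (2 * t * SAB) * s + t ^ 2 * s ^ 2 := by
    funext s
    rw [hderiv, h2, hQ s, hL s]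
    ring
  rw [hfun, quad_iter2']
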